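/- In the PARTITION-to-DRP-MSR construction, for any permutation π of [2n+2] with π(i) ∉ {1,2} for all i ∈ [1,n], the send cost of machine 1 equals ∑ of s_i over {i : π(i) ∈ [3,n+2]}, the send cost of machine 2 equals ∑ of s_i over {i : π(i) ∈ [n+3,2n+2]}, the receive costs of machines 1 and 2 are 0, the send costs of machines 3,...,2n+2 are 0, and the sets {s_i : π(i) ∈ [3,n+2]} and {s_i : π(i) ∈ [n+3,2n+2]} form a partition of S. -/

import Mathlib

open Finset

/-- Transmission matrix of the PARTITION-to-DRP-MSR reduction (0-indexed). -/
def redT (n : ℕ) (s : Fin n → ℕ) : Matrix (Fin (2*n+2)) (Fin (2*n+2)) ℝ :=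
  fun i j => if h : (i.val = 0 ∨ i.val = 1) ∧ j.val < n then (s ⟨j.val, h.2⟩ : ℝ) else 0

/-- Communication cost matrix of the PARTITION-to-DRP-MSR reduction (0-indexed). -/
def redC (n : ℕ) (Δ : ℕ) : Matrix (Fin (2*n+2)) (Fin (2*n+2)) ℝ :=
  fun i j =>
    if i.val = 0 ∧ 2 ≤ j.val ∧ j.val ≤ n+1 then 1
    else if i.val = 1 ∧ n+2 ≤ j.val then 1
    else if (i.val = 0 ∧ j.val = 1) ∨ (i.val = 1 ∧ j.val = 0) then (Δ : ℝ)
    else 0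

/-- Send cost of machine `i` under permutation `π`. -/
def sendCost {m : ℕ} (T C : Matrix (Fin m) (Fin m) ℝ) (π : Equiv.Perm (Fin m)) (i : Fin m) : ℝ :=
  ∑ j, T i j * C i (π j)

/-- Receive cost of machine `i` under permutation `π`. -/
def rcvCost {m : ℕ} (T C : Matrix (Fin m) (Fin m) ℝ) (π : Equiv.Perm (Fin m)) (i : Fin m) : ℝ :=
  ∑ j, T j (π⁻¹ i) * C j i

/-- Value `s_j` of the data column `j` (0 for the all-zero columns). -/
def colVal (n : ℕ) (s : Fin n → ℕ) (j : Fin (2*n+2)) : ℝ :=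
  if h : j.val < n then (s ⟨j.val, h⟩ : ℝ) else 0

theorem stmt_4 (n : ℕ) (hn : 0 < n) (s : Fin n → ℕ) (hs : ∀ i, 0 < s i)
    (Δ : ℕ) (hΔ : ∑ i, s i ≤ Δ)
    (π : Equiv.Perm (Fin (2*n+2)))
    (hπ : ∀ j : Fin (2*n+2), j.val < n → 2 ≤ (π j).val) :
    sendCost (redT n s) (redC n Δ) π ⟨0, by omega⟩ =
        ∑ j ∈ Finset.univ.filter
          (fun j : Fin (2*n+2) => j.val < n ∧ 2 ≤ (π j).val ∧ (π j).val ≤ n+1),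
          colVal n s j ∧
      sendCost (redT n s) (redC n Δ) π ⟨1, by omega⟩ =
        ∑ j ∈ Finset.univ.filter
          (fun j : Fin (2*n+2) => j.val < n ∧ n+2 ≤ (π j).val),
          colVal n s j ∧
      rcvCost (redT n s) (redC n Δ) π ⟨0, by omega⟩ = 0 ∧
      rcvCost (redT n s) (redC n Δ) π ⟨1, by omega⟩ = 0 ∧
      (∀ i : Fin (2*n+2), 2 ≤ i.val → sendCost (redT n s) (redC n Δ) π i = 0) ∧
      Disjoint
        (Finset.univ.filter
          (fun j : Fin (2*n+2) => j.val < n ∧ 2 ≤ (π j).val ∧ (π j).val ≤ n+1))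
        (Finset.univ.filter
          (fun j : Fin (2*n+2) => j.val < n ∧ n+2 ≤ (π j).val)) ∧
      (Finset.univ.filter
          (fun j : Fin (2*n+2) => j.val < n ∧ 2 ≤ (π j).val ∧ (π j).val ≤ n+1)) ∪
        (Finset.univ.filter
          (fun j : Fin (2*n+2) => j.val < n ∧ n+2 ≤ (π j).val)) =
        Finset.univ.filter (fun j : Fin (2*n+2) => j.val < n) := by
  have key : ∀ (v : Fin (2*n+2)), v.val < 2 → ¬ ((π⁻¹ v : Fin (2*n+2)).val < n) := by
    intro v hv h
    have h2 := hπ _ h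
    rw [Equiv.Perm.coe_inv, Equiv.apply_symm_apply] at h2
    omega
  refine ⟨?_, ?_, ?_, ?_, ?_, ?_, ?_⟩
  · rw [Finset.sum_filter]
    refine Finset.sum_congr rfl fun j _ => ?_
    simp only [sendCost, redT, redC, colVal]
    by_cases hj : j.val < n
    · have h2 := hπ j hj
      rw [dif_pos ⟨Or.inl trivial, hj⟩]
      by_cases hc : (π j).val ≤ n+1
      · rw [if_pos ⟨trivial, h2, hc⟩, if_pos ⟨hj, h2, hc⟩, mul_one, dif_pos hj]
      · rw [if_neg (fun h => hc h.2.2), if_neg (fun h => Nat.zero_ne_one h.1),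
          if_neg ?_, if_neg (fun h => hc h.2.2), mul_zero]
        rintro (⟨-, h⟩ | ⟨h, -⟩)
        · omega
        · exact Nat.zero_ne_one h
    · rw [dif_neg (fun h => hj h.2), zero_mul, if_neg (fun h => hj h.1)]
  · rw [Finset.sum_filter]
    refine Finset.sum_congr rfl fun j _ => ?_
    simp only [sendCost, redT, redC, colVal]
    by_cases hj : j.val < n
    · have h2 := hπ j hj
      rw [dif_pos ⟨Or.inr trivial, hj⟩]
      by_cases hc : n+2 ≤ (π j).val
      · rw [if_neg (fun h => Nat.one_ne_zero h.1), if_pos ⟨trivial, hc⟩,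
          if_pos ⟨hj, hc⟩, mul_one, dif_pos hj]
      · rw [if_neg (fun h => Nat.one_ne_zero h.1), if_neg (fun h => hc h.2),
          if_neg ?_, if_neg (fun h => hc h.2), mul_zero]
        rintro (⟨h, -⟩ | ⟨-, h⟩)
        · exact Nat.one_ne_zero h
        · omega
    · rw [dif_neg (fun h => hj h.2), zero_mul, if_neg (fun h => hj h.1)]
  · refine Finset.sum_eq_zero fun j _ => ?_
    simp only [rcvCost, redT]
    rw [dif_neg (fun h => key ⟨0, by omega⟩ (by norm_num) h.2), zero_mul]
  · refine Finset.sum_eq_zero fun j _ => ?_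
    simp only [rcvCost, redT]
    rw [dif_neg (fun h => key ⟨1, by omega⟩ (by norm_num) h.2), zero_mul]
  · intro i hi
    refine Finset.sum_eq_zero fun j _ => ?_
    simp only [sendCost, redT]
    rw [dif_neg (fun h => by rcases h.1 with h1 | h1 <;> omega), zero_mul]
  · rw [Finset.disjoint_filter]
    rintro j _ ⟨_, _, h⟩
    omega
  · ext j
    simp only [Finset.mem_union, Finset.mem_filter, Finset.mem_univ, true_and]
    constructor
    · rintro (⟨h, _⟩ | ⟨h, _⟩) <;> exact h
    · intro h
      have := hπ j h
      omega
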